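/- The Cartan subalgebras of the deformed structure coincide with those of the original one: { x ∈ A : Δ_k(x) = Δ_k(1)(x⊗1) = (x⊗1)Δ_k(1) } = A_t and { x ∈ A : Δ_k(x) = Δ_k(1)(1⊗x) = (1⊗x)Δ_k(1) } = A_s; moreover the canonical element associated to the deformed coproduct is k⁻¹q, i.e., k⁻¹q is an invertible element of A_t and Δ_k(1) = Σ_γ Σ_{i,j} (1/n_γ) κ_k⁻¹(e^γ_{i,j} (k⁻¹q)) ⊗ e^γ_{j,i}, where κ_k⁻¹ is the inverse of the bijection κ_k. -/

import Mathlib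

/- Context: a finite-dimensional C*-quantum groupoid (weak Hopf C*-algebra)
`(A, Δ, κ, ε)`, together with a fixed system of matrix units `e γ i j`
(`γ ∈ Γ` finite, `1 ≤ i,j ≤ n γ`) spanning the target Cartan subalgebra `A_t`.
The componentwise involution of `A ⊗[ℂ] A` is encoded by the field `starT`
(uniquely determined by `starT_add` and `starT_tmul`). -/

open scoped TensorProduct ComplexOrder

/-- A finite-dimensional C*-quantum groupoid (weak Hopf C*-algebra) with a chosen
system of matrix units for its target Cartan subalgebra. -/
structure WeakHopfCStar (A : Type*) (Γ : Type*) [Fintype Γ] [DecidableEq Γ]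
    [NormedRing A] [StarRing A] [CStarRing A] [NormedAlgebra ℂ A] [StarModule ℂ A]
    [FiniteDimensional ℂ A] (n : Γ → ℕ) where
  /-- the coproduct -/
  Δ : A →ₗ[ℂ] A ⊗[ℂ] A
  /-- the antipode -/
  κ : A →ₗ[ℂ] A
  /-- the counit -/
  ε : A →ₗ[ℂ] ℂ
  /-- the componentwise involution of `A ⊗ A` -/
  starT : A ⊗[ℂ] A → A ⊗[ℂ] A
  starT_add : ∀ x y : A ⊗[ℂ] A, starT (x + y) = starT x + starT y
  starT_tmul : ∀ a b : A, starT (a ⊗ₜ[ℂ] b) = star a ⊗ₜ[ℂ] star b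
  Δ_mul : ∀ a b : A, Δ (a * b) = Δ a * Δ b
  Δ_star : ∀ a : A, Δ (star a) = starT (Δ a)
  coassoc : ∀ a : A,
    (TensorProduct.assoc ℂ A A A) ((TensorProduct.map Δ LinearMap.id) (Δ a)) =
      (TensorProduct.map LinearMap.id Δ) (Δ a)
  κ_antimul : ∀ x y : A, κ (x * y) = κ y * κ x
  κ_star_sq : ∀ a : A, κ (star (κ (star a))) = a
  κ_flip : ∀ a : A,
    (TensorProduct.map κ κ) (Δ a) = (TensorProduct.comm ℂ A A) (Δ (κ a))
  antipode : ∀ x : A,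
    (TensorProduct.map ((LinearMap.mul' ℂ A).comp (TensorProduct.map κ LinearMap.id))
        LinearMap.id) ((TensorProduct.map Δ LinearMap.id) (Δ x)) =
      ((1 : A) ⊗ₜ[ℂ] x) * Δ 1
  ε_pos : ∀ a : A, 0 ≤ ε (star a * a)
  ε_counit_l : ∀ a : A,
    (TensorProduct.lid ℂ A) ((TensorProduct.map ε LinearMap.id) (Δ a)) = a
  ε_counit_r : ∀ a : A,
    (TensorProduct.rid ℂ A) ((TensorProduct.map LinearMap.id ε) (Δ a)) = a
  ε_weak : ∀ x y : A,
    (LinearMap.mul' ℂ ℂ)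
        ((TensorProduct.map ε ε) ((x ⊗ₜ[ℂ] (1 : A)) * Δ 1 * ((1 : A) ⊗ₜ[ℂ] y))) =
      ε (x * y)
  n_pos : ∀ γ : Γ, 1 ≤ n γ
  /-- the matrix units of the target Cartan subalgebra `A_t` -/
  e : (γ : Γ) → Fin (n γ) → Fin (n γ) → A
  e_target : ∀ (γ : Γ) (i j : Fin (n γ)),
    Δ (e γ i j) = Δ 1 * (e γ i j ⊗ₜ[ℂ] (1 : A)) ∧
      Δ (e γ i j) = (e γ i j ⊗ₜ[ℂ] (1 : A)) * Δ 1
  e_mul_same : ∀ (γ : Γ) (i j k l : Fin (n γ)),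
    e γ i j * e γ k l = if j = k then e γ i l else 0
  e_mul_ne : ∀ (γ δ : Γ), γ ≠ δ → ∀ (i j : Fin (n γ)) (k l : Fin (n δ)),
    e γ i j * e δ k l = 0
  e_star : ∀ (γ : Γ) (i j : Fin (n γ)), star (e γ i j) = e γ j i
  e_sum : ∑ γ : Γ, ∑ i : Fin (n γ), e γ i i = 1
  e_span : ∀ x : A,
    (Δ x = Δ 1 * (x ⊗ₜ[ℂ] (1 : A)) ∧ Δ x = (x ⊗ₜ[ℂ] (1 : A)) * Δ 1) →
      x ∈ Submodule.span ℂ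
        (Set.range fun p : Σ γ : Γ, Fin (n γ) × Fin (n γ) => e p.1 p.2.1 p.2.2)

namespace WeakHopfCStar

variable {A Γ : Type*} [Fintype Γ] [DecidableEq Γ]
  [NormedRing A] [StarRing A] [CStarRing A] [NormedAlgebra ℂ A] [StarModule ℂ A]
  [FiniteDimensional ℂ A] {n : Γ → ℕ}

/-- The target Cartan subalgebra `A_t`. -/
def tgt (W : WeakHopfCStar A Γ n) : Set A :=
  {x | W.Δ x = W.Δ 1 * (x ⊗ₜ[ℂ] (1 : A)) ∧ W.Δ x = (x ⊗ₜ[ℂ] (1 : A)) * W.Δ 1}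

/-- The source Cartan subalgebra `A_s`. -/
def src (W : WeakHopfCStar A Γ n) : Set A :=
  {x | W.Δ x = W.Δ 1 * ((1 : A) ⊗ₜ[ℂ] x) ∧ W.Δ x = ((1 : A) ⊗ₜ[ℂ] x) * W.Δ 1}

/-- The inverse of the antipode, `κ⁻¹ = * ∘ κ ∘ *`. -/
noncomputable def κinv (W : WeakHopfCStar A Γ n) (a : A) : A := star (W.κ (star a))

/-- The canonical conditional expectation `E_{Z(A_t)}` of `A_t` onto its center. -/
noncomputable def EZt (W : WeakHopfCStar A Γ n) (x : A) : A :=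
  ∑ γ : Γ, ∑ i : Fin (n γ), ∑ j : Fin (n γ),
    (n γ : ℂ)⁻¹ • (W.e γ i j * x * W.e γ j i)

/-- The defining property of the canonical element `q ∈ A_t`:
`Δ(1) = Σ_γ Σ_{i,j} (1/n_γ) κ⁻¹(e^γ_{i,j} q) ⊗ e^γ_{j,i}`. -/
noncomputable def qFormula (W : WeakHopfCStar A Γ n) (q : A) : Prop :=
  W.Δ 1 = ∑ γ : Γ, ∑ i : Fin (n γ), ∑ j : Fin (n γ),
    (n γ : ℂ)⁻¹ • (W.κinv (W.e γ i j * q) ⊗ₜ[ℂ] W.e γ j i)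

end WeakHopfCStar

namespace WeakHopfCStar

variable {A Γ : Type*} [Fintype Γ] [DecidableEq Γ]
  [NormedRing A] [StarRing A] [CStarRing A] [NormedAlgebra ℂ A] [StarModule ℂ A]
  [FiniteDimensional ℂ A] {n : Γ → ℕ}

/-- The deformed coproduct `Δ_k(a) = Δ(a)(1 ⊗ k⁻¹)`. -/
noncomputable def Δk (W : WeakHopfCStar A Γ n) (k : A) : A →ₗ[ℂ] A ⊗[ℂ] A :=
  (LinearMap.mulRight ℂ ((1 : A) ⊗ₜ[ℂ] Ring.inverse k)).comp W.Δ

/-- The deformed antipode `κ_k(a) = k κ(a) k⁻¹`. -/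
noncomputable def κk (W : WeakHopfCStar A Γ n) (k : A) : A →ₗ[ℂ] A :=
  (LinearMap.mulLeft ℂ k).comp ((LinearMap.mulRight ℂ (Ring.inverse k)).comp W.κ)

/-- The deformed counit `ε_k(a) = ε(a k)`. -/
noncomputable def εk (W : WeakHopfCStar A Γ n) (k : A) : A →ₗ[ℂ] ℂ :=
  W.ε.comp (LinearMap.mulRight ℂ k)

end WeakHopfCStar
namespace WeakHopfCStar

variable {A Γ : Type*} [Fintype Γ] [DecidableEq Γ]
  [NormedRing A] [StarRing A] [CStarRing A] [NormedAlgebra ℂ A] [StarModule ℂ A]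
  [FiniteDimensional ℂ A] {n : Γ → ℕ} (W : WeakHopfCStar A Γ n)

lemma aux_κ_κinv (a : A) : W.κ (W.κinv a) = a := W.κ_star_sq a

lemma aux_κinv_κ (a : A) : W.κinv (W.κ a) = a := by
  have h := W.κ_star_sq (star a)
  rw [star_star] at h
  unfold κinv
  rw [h, star_star]

lemma aux_κ_one : W.κ (1 : A) = 1 := by
  have h1 : W.κ (W.κinv 1 * 1) = W.κ 1 * W.κ (W.κinv 1) := W.κ_antimul _ _
  rw [mul_one, W.aux_κ_κinv] at h1
  simpa using h1.symm

lemma aux_κinv_zero : W.κinv (0 : A) = 0 := by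
  unfold κinv; rw [star_zero, map_zero, star_zero]

lemma aux_κinv_antimul (x y : A) : W.κinv (x * y) = W.κinv y * W.κinv x := by
  unfold κinv
  rw [star_mul, W.κ_antimul, star_mul]

/-- `κ⁻¹` as a linear map. -/
noncomputable def κinvL : A →ₗ[ℂ] A where
  toFun := W.κinv
  map_add' a b := by unfold κinv; rw [star_add, map_add, star_add]
  map_smul' c a := by
    unfold κinv
    simp only [star_smul, map_smul, star_star, RingHom.id_apply]

@[simp] lemma κinvL_apply (a : A) : W.κinvL a = W.κinv a := rfl

lemma aux_Δ_one_mul (x : A) : W.Δ 1 * W.Δ x = W.Δ x := by rw [← W.Δ_mul, one_mul]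

lemma aux_Δ_mul_one (x : A) : W.Δ x * W.Δ 1 = W.Δ x := by rw [← W.Δ_mul, mul_one]

lemma aux_Δ_inj {a b : A} (h : W.Δ a = W.Δ b) : a = b := by
  have ha := W.ε_counit_r a
  rw [h, W.ε_counit_r b] at ha
  exact ha.symm

lemma aux_tgt_mul {a b : A} (ha : a ∈ W.tgt) (hb : b ∈ W.tgt) : a * b ∈ W.tgt := by
  obtain ⟨ha1, ha2⟩ := ha
  obtain ⟨hb1, hb2⟩ := hb
  have key1 : W.Δ (a * b) = ((a * b) ⊗ₜ[ℂ] (1 : A)) * W.Δ 1 := by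
    calc W.Δ (a * b) = W.Δ a * W.Δ b := W.Δ_mul a b
      _ = ((a ⊗ₜ[ℂ] (1 : A)) * W.Δ 1) * W.Δ b := by rw [← ha2]
      _ = (a ⊗ₜ[ℂ] (1 : A)) * (W.Δ 1 * W.Δ b) := by rw [mul_assoc]
      _ = (a ⊗ₜ[ℂ] (1 : A)) * ((b ⊗ₜ[ℂ] (1 : A)) * W.Δ 1) := by
          rw [W.aux_Δ_one_mul, hb2]
      _ = ((a ⊗ₜ[ℂ] (1 : A)) * (b ⊗ₜ[ℂ] (1 : A))) * W.Δ 1 := by rw [mul_assoc]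
      _ = ((a * b) ⊗ₜ[ℂ] (1 : A)) * W.Δ 1 := by
          rw [Algebra.TensorProduct.tmul_mul_tmul, mul_one]
  have key2 : W.Δ (a * b) = W.Δ 1 * ((a * b) ⊗ₜ[ℂ] (1 : A)) := by
    calc W.Δ (a * b) = W.Δ a * W.Δ b := W.Δ_mul a b
      _ = W.Δ a * (W.Δ 1 * (b ⊗ₜ[ℂ] (1 : A))) := by rw [← hb1]
      _ = (W.Δ a * W.Δ 1) * (b ⊗ₜ[ℂ] (1 : A)) := by rw [mul_assoc]
      _ = (W.Δ 1 * (a ⊗ₜ[ℂ] (1 : A))) * (b ⊗ₜ[ℂ] (1 : A)) := by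
          rw [W.aux_Δ_mul_one, ha1]
      _ = W.Δ 1 * ((a ⊗ₜ[ℂ] (1 : A)) * (b ⊗ₜ[ℂ] (1 : A))) := by rw [mul_assoc]
      _ = W.Δ 1 * ((a * b) ⊗ₜ[ℂ] (1 : A)) := by
          rw [Algebra.TensorProduct.tmul_mul_tmul, mul_one]
  exact ⟨key2, key1⟩

end WeakHopfCStar
namespace WeakHopfCStar

variable {A Γ : Type*} [Fintype Γ] [DecidableEq Γ]
  [NormedRing A] [StarRing A] [CStarRing A] [NormedAlgebra ℂ A] [StarModule ℂ A]
  [FiniteDimensional ℂ A] {n : Γ → ℕ} (W : WeakHopfCStar A Γ n)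

lemma aux_tgt_inverse {k : A} (hk : k ∈ W.tgt) (hku : IsUnit k) :
    Ring.inverse k ∈ W.tgt := by
  obtain ⟨hk1, hk2⟩ := hk
  set K := Ring.inverse k with hK
  have hmul1 : (k ⊗ₜ[ℂ] (1 : A)) * (K ⊗ₜ[ℂ] (1 : A)) = 1 := by
    rw [Algebra.TensorProduct.tmul_mul_tmul, mul_one, Ring.mul_inverse_cancel k hku,
      Algebra.TensorProduct.one_def]
  have hmul2 : (K ⊗ₜ[ℂ] (1 : A)) * (k ⊗ₜ[ℂ] (1 : A)) = 1 := by
    rw [Algebra.TensorProduct.tmul_mul_tmul, mul_one, Ring.inverse_mul_cancel k hku,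
      Algebra.TensorProduct.one_def]
  have hswap : W.Δ 1 * (k ⊗ₜ[ℂ] (1 : A)) = (k ⊗ₜ[ℂ] (1 : A)) * W.Δ 1 := by
    rw [← hk1, hk2]
  have hcomm : W.Δ 1 * (K ⊗ₜ[ℂ] (1 : A)) = (K ⊗ₜ[ℂ] (1 : A)) * W.Δ 1 := by
    let u : (A ⊗[ℂ] A)ˣ := ⟨k ⊗ₜ[ℂ] (1 : A), K ⊗ₜ[ℂ] (1 : A), hmul1, hmul2⟩
    have hcu : Commute (W.Δ 1) (u : A ⊗[ℂ] A) := hswap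
    exact hcu.units_inv_right
  have hΔK : W.Δ K = (K ⊗ₜ[ℂ] (1 : A)) * W.Δ 1 := by
    have hKk : W.Δ K * W.Δ k = W.Δ 1 := by
      rw [← W.Δ_mul, Ring.inverse_mul_cancel k hku]
    have hkc : W.Δ k * ((K ⊗ₜ[ℂ] (1 : A)) * W.Δ 1) = W.Δ 1 := by
      calc W.Δ k * ((K ⊗ₜ[ℂ] (1 : A)) * W.Δ 1)
          = (W.Δ 1 * (k ⊗ₜ[ℂ] (1 : A))) * ((K ⊗ₜ[ℂ] (1 : A)) * W.Δ 1) := by rw [← hk1]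
        _ = W.Δ 1 * (((k ⊗ₜ[ℂ] (1 : A)) * (K ⊗ₜ[ℂ] (1 : A))) * W.Δ 1) := by
            rw [mul_assoc, mul_assoc]
        _ = W.Δ 1 := by rw [hmul1, one_mul, W.aux_Δ_one_mul]
    calc W.Δ K = W.Δ K * W.Δ 1 := (W.aux_Δ_mul_one K).symm
      _ = W.Δ K * (W.Δ k * ((K ⊗ₜ[ℂ] (1 : A)) * W.Δ 1)) := by rw [hkc]
      _ = (W.Δ K * W.Δ k) * ((K ⊗ₜ[ℂ] (1 : A)) * W.Δ 1) := by rw [mul_assoc]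
      _ = W.Δ 1 * ((K ⊗ₜ[ℂ] (1 : A)) * W.Δ 1) := by rw [hKk]
      _ = (W.Δ 1 * (K ⊗ₜ[ℂ] (1 : A))) * W.Δ 1 := by rw [mul_assoc]
      _ = ((K ⊗ₜ[ℂ] (1 : A)) * W.Δ 1) * W.Δ 1 := by rw [hcomm]
      _ = (K ⊗ₜ[ℂ] (1 : A)) * (W.Δ 1 * W.Δ 1) := by rw [mul_assoc]
      _ = (K ⊗ₜ[ℂ] (1 : A)) * W.Δ 1 := by rw [W.aux_Δ_one_mul]
  exact ⟨by rw [hΔK, hcomm], hΔK⟩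

/-- An element satisfying the right half of the source condition commutes with `A_t`. -/
lemma aux_src_half_comm {x y : A} (hx : W.Δ x = ((1 : A) ⊗ₜ[ℂ] x) * W.Δ 1)
    (hy : y ∈ W.tgt) : x * y = y * x := by
  obtain ⟨hy1, hy2⟩ := hy
  apply W.aux_Δ_inj
  have h1 : W.Δ (x * y) = (y ⊗ₜ[ℂ] x) * W.Δ 1 := by
    calc W.Δ (x * y) = W.Δ x * W.Δ y := W.Δ_mul x y
      _ = W.Δ x * (W.Δ 1 * (y ⊗ₜ[ℂ] (1 : A))) := by rw [← hy1]
      _ = (W.Δ x * W.Δ 1) * (y ⊗ₜ[ℂ] (1 : A)) := by rw [mul_assoc]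
      _ = (((1 : A) ⊗ₜ[ℂ] x) * W.Δ 1) * (y ⊗ₜ[ℂ] (1 : A)) := by
          rw [W.aux_Δ_mul_one, hx]
      _ = ((1 : A) ⊗ₜ[ℂ] x) * (W.Δ 1 * (y ⊗ₜ[ℂ] (1 : A))) := by rw [mul_assoc]
      _ = ((1 : A) ⊗ₜ[ℂ] x) * ((y ⊗ₜ[ℂ] (1 : A)) * W.Δ 1) := by rw [← hy1, hy2]
      _ = (((1 : A) ⊗ₜ[ℂ] x) * (y ⊗ₜ[ℂ] (1 : A))) * W.Δ 1 := by rw [mul_assoc]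
      _ = (y ⊗ₜ[ℂ] x) * W.Δ 1 := by
          rw [Algebra.TensorProduct.tmul_mul_tmul, one_mul, mul_one]
  have h2 : W.Δ (y * x) = (y ⊗ₜ[ℂ] x) * W.Δ 1 := by
    calc W.Δ (y * x) = W.Δ y * W.Δ x := W.Δ_mul y x
      _ = ((y ⊗ₜ[ℂ] (1 : A)) * W.Δ 1) * W.Δ x := by rw [← hy2]
      _ = (y ⊗ₜ[ℂ] (1 : A)) * (W.Δ 1 * W.Δ x) := by rw [mul_assoc]
      _ = (y ⊗ₜ[ℂ] (1 : A)) * (((1 : A) ⊗ₜ[ℂ] x) * W.Δ 1) := by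
          rw [W.aux_Δ_one_mul, hx]
      _ = ((y ⊗ₜ[ℂ] (1 : A)) * ((1 : A) ⊗ₜ[ℂ] x)) * W.Δ 1 := by rw [mul_assoc]
      _ = (y ⊗ₜ[ℂ] x) * W.Δ 1 := by
          rw [Algebra.TensorProduct.tmul_mul_tmul, one_mul, mul_one]
  rw [h1, h2]

lemma aux_comm_comm (x : A ⊗[ℂ] A) :
    (TensorProduct.comm ℂ A A) ((TensorProduct.comm ℂ A A) x) = x := by
  induction x using TensorProduct.induction_on with
  | zero => simp
  | tmul a b => simp
  | add a b iha ihb => rw [map_add, map_add, iha, ihb]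

end WeakHopfCStar
namespace WeakHopfCStar

set_option linter.unusedSectionVars false

variable {A Γ : Type*} [Fintype Γ] [DecidableEq Γ]
  [NormedRing A] [StarRing A] [CStarRing A] [NormedAlgebra ℂ A] [StarModule ℂ A]
  [FiniteDimensional ℂ A] {n : Γ → ℕ} (W : WeakHopfCStar A Γ n)

/-- Elements of the span of the matrix units can be moved from one tensor leg
to the other in the canonical sum. -/
lemma aux_sum_shift (F : A →ₗ[ℂ] A) {t : A}
    (ht : t ∈ Submodule.span ℂ
      (Set.range fun p : Σ γ : Γ, Fin (n γ) × Fin (n γ) => W.e p.1 p.2.1 p.2.2)) :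
    ∑ γ : Γ, ∑ i : Fin (n γ), ∑ j : Fin (n γ),
        (n γ : ℂ)⁻¹ • (F (t * W.e γ i j) ⊗ₜ[ℂ] W.e γ j i) =
    ∑ γ : Γ, ∑ i : Fin (n γ), ∑ j : Fin (n γ),
        (n γ : ℂ)⁻¹ • (F (W.e γ i j) ⊗ₜ[ℂ] (W.e γ j i * t)) := by
  induction ht using Submodule.span_induction with
  | mem x hx =>
      obtain ⟨⟨δ, c, d⟩, rfl⟩ := hx
      have hL : ∀ γ : Γ, ∀ i : Fin (n γ), ∀ j : Fin (n γ), γ ≠ δ →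
          F (W.e δ c d * W.e γ i j) ⊗ₜ[ℂ] W.e γ j i = 0 := by
        intro γ i j hγ
        rw [W.e_mul_ne δ γ (Ne.symm hγ), map_zero, TensorProduct.zero_tmul]
      have hR : ∀ γ : Γ, ∀ i : Fin (n γ), ∀ j : Fin (n γ), γ ≠ δ →
          F (W.e γ i j) ⊗ₜ[ℂ] (W.e γ j i * W.e δ c d) = 0 := by
        intro γ i j hγ
        rw [W.e_mul_ne γ δ hγ, TensorProduct.tmul_zero]
      calc ∑ γ : Γ, ∑ i : Fin (n γ), ∑ j : Fin (n γ),
              (n γ : ℂ)⁻¹ • (F (W.e δ c d * W.e γ i j) ⊗ₜ[ℂ] W.e γ j i)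
          = ∑ i : Fin (n δ), ∑ j : Fin (n δ),
              (n δ : ℂ)⁻¹ • (F (W.e δ c d * W.e δ i j) ⊗ₜ[ℂ] W.e δ j i) := by
            apply Fintype.sum_eq_single δ
            intro γ hγ
            apply Finset.sum_eq_zero; intro i _
            apply Finset.sum_eq_zero; intro j _
            rw [hL γ i j hγ, smul_zero]
        _ = ∑ j : Fin (n δ), (n δ : ℂ)⁻¹ • (F (W.e δ c j) ⊗ₜ[ℂ] W.e δ j d) := by
            rw [Fintype.sum_eq_single d]
            · apply Finset.sum_congr rfl; intro j _
              rw [W.e_mul_same, if_pos rfl]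
            · intro i hi
              apply Finset.sum_eq_zero; intro j _
              rw [W.e_mul_same, if_neg (fun h => hi h.symm), map_zero,
                TensorProduct.zero_tmul, smul_zero]
        _ = ∑ i : Fin (n δ), ∑ j : Fin (n δ),
              (n δ : ℂ)⁻¹ • (F (W.e δ i j) ⊗ₜ[ℂ] (W.e δ j i * W.e δ c d)) := by
            symm
            rw [Fintype.sum_eq_single c]
            · apply Finset.sum_congr rfl; intro j _
              rw [W.e_mul_same, if_pos rfl]
            · intro i hi
              apply Finset.sum_eq_zero; intro j _
              rw [W.e_mul_same, if_neg (fun h => hi h), TensorProduct.tmul_zero,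
                smul_zero]
        _ = ∑ γ : Γ, ∑ i : Fin (n γ), ∑ j : Fin (n γ),
              (n γ : ℂ)⁻¹ • (F (W.e γ i j) ⊗ₜ[ℂ] (W.e γ j i * W.e δ c d)) := by
            symm
            apply Fintype.sum_eq_single δ
            intro γ hγ
            apply Finset.sum_eq_zero; intro i _
            apply Finset.sum_eq_zero; intro j _
            rw [hR γ i j hγ, smul_zero]
  | zero => simp
  | add x y hx hy ihx ihy =>
      simp only [add_mul, mul_add, map_add, TensorProduct.add_tmul,
        TensorProduct.tmul_add, smul_add, Finset.sum_add_distrib]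
      rw [ihx, ihy]
  | smul c x hx ih =>
      have hl : ∀ (γ : Γ) (i j : Fin (n γ)),
          (n γ : ℂ)⁻¹ • (F ((c • x) * W.e γ i j) ⊗ₜ[ℂ] W.e γ j i) =
            c • ((n γ : ℂ)⁻¹ • (F (x * W.e γ i j) ⊗ₜ[ℂ] W.e γ j i)) := by
        intro γ i j
        rw [smul_mul_assoc, map_smul, ← TensorProduct.smul_tmul', smul_comm]
      have hr : ∀ (γ : Γ) (i j : Fin (n γ)),
          (n γ : ℂ)⁻¹ • (F (W.e γ i j) ⊗ₜ[ℂ] (W.e γ j i * (c • x))) =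
            c • ((n γ : ℂ)⁻¹ • (F (W.e γ i j) ⊗ₜ[ℂ] (W.e γ j i * x))) := by
        intro γ i j
        rw [mul_smul_comm, TensorProduct.tmul_smul, smul_comm]
      simp only [hl, hr, ← Finset.smul_sum]
      simp only [← Finset.smul_sum] at ih
      rw [ih]

end WeakHopfCStar
namespace WeakHopfCStar

set_option linter.unusedSectionVars false

variable {A Γ : Type*} [Fintype Γ] [DecidableEq Γ]
  [NormedRing A] [StarRing A] [CStarRing A] [NormedAlgebra ℂ A] [StarModule ℂ A]
  [FiniteDimensional ℂ A] {n : Γ → ℕ} (W : WeakHopfCStar A Γ n)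

lemma aux_κinv_add (a b : A) : W.κinv (a + b) = W.κinv a + W.κinv b :=
  W.κinvL.map_add a b

lemma aux_κinv_smul (c : ℂ) (a : A) : W.κinv (c • a) = c • W.κinv a :=
  W.κinvL.map_smul c a

lemma aux_one_mem_span : (1 : A) ∈ Submodule.span ℂ
    (Set.range fun p : Σ γ : Γ, Fin (n γ) × Fin (n γ) => W.e p.1 p.2.1 p.2.2) := by
  rw [← W.e_sum]
  apply Submodule.sum_mem; intro γ _
  apply Submodule.sum_mem; intro i _
  exact Submodule.subset_span ⟨⟨γ, i, i⟩, rfl⟩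

lemma aux_key_q (q : A) (hqt : q ∈ W.tgt) (hqf : W.qFormula q) (δ : Γ)
    (a b : Fin (n δ)) : W.κinv (W.κinv (W.e δ a b * q)) = q * W.e δ a b := by
  classical
  -- Step 1: (κ ⊗ κ)(Δ1) = flip (Δ1)
  have hD1 : TensorProduct.map W.κ W.κ (W.Δ 1) = TensorProduct.comm ℂ A A (W.Δ 1) := by
    have h := W.κ_flip 1; rwa [W.aux_κ_one] at h
  -- Step 2: flip (Δ1) = (κ⁻¹ ⊗ κ⁻¹)(Δ1)
  have hid : W.κinvL ∘ₗ W.κ = LinearMap.id := by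
    ext x; simp [W.aux_κinv_κ]
  have hD2 : TensorProduct.comm ℂ A A (W.Δ 1) =
      TensorProduct.map W.κinvL W.κinvL (W.Δ 1) := by
    have h1 : TensorProduct.map W.κinvL W.κinvL (TensorProduct.map W.κ W.κ (W.Δ 1)) =
        W.Δ 1 := by
      rw [← LinearMap.comp_apply, ← TensorProduct.map_comp, hid, TensorProduct.map_id,
        LinearMap.id_apply]
    rw [hD1, TensorProduct.map_comm] at h1
    have h2 := congrArg (TensorProduct.comm ℂ A A) h1
    rw [aux_comm_comm] at h2
    exact h2.symm
  -- Step 3: apply (id ⊗ κ) and expand with the formula for q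
  have h3 := congrArg (TensorProduct.map (LinearMap.id : A →ₗ[ℂ] A) W.κ) hD2
  rw [hqf] at h3
  simp only [map_sum, map_smul, LinearEquiv.map_smul, TensorProduct.comm_tmul,
    TensorProduct.map_tmul, LinearMap.id_apply, κinvL_apply, W.aux_κ_κinv] at h3
  -- h3 : ∑ (1/n) • (e γ j i ⊗ (e γ i j * q)) = ∑ (1/n) • (κinv (κinv (e γ i j * q)) ⊗ e γ j i)
  -- Step 4: rewrite the left side as ∑ (1/n) • ((q * e γ i j) ⊗ e γ j i)
  have hq_span := W.e_span q hqt
  have h4 := W.aux_sum_shift LinearMap.id hq_span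
  simp only [LinearMap.id_apply] at h4
  have h5 : ∀ γ : Γ, (∑ i : Fin (n γ), ∑ j : Fin (n γ),
      (n γ : ℂ)⁻¹ • (W.e γ i j ⊗ₜ[ℂ] (W.e γ j i * q))) =
      ∑ i : Fin (n γ), ∑ j : Fin (n γ),
      (n γ : ℂ)⁻¹ • (W.e γ j i ⊗ₜ[ℂ] (W.e γ i j * q)) := fun γ => Finset.sum_comm
  have h6 : (∑ γ : Γ, ∑ i : Fin (n γ), ∑ j : Fin (n γ),
      (n γ : ℂ)⁻¹ • ((q * W.e γ i j) ⊗ₜ[ℂ] W.e γ j i)) =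
      ∑ γ : Γ, ∑ i : Fin (n γ), ∑ j : Fin (n γ),
      (n γ : ℂ)⁻¹ • (W.κinv (W.κinv (W.e γ i j * q)) ⊗ₜ[ℂ] W.e γ j i) := by
    rw [h4]
    rw [Finset.sum_congr rfl (fun γ _ => h5 γ)]
    exact h3
  -- Step 5: extract the (δ, a, b) term
  by_cases h0 : W.e δ a b = 0
  · simp [h0, W.aux_κinv_zero]
  · have hf : ∃ f : Module.Dual ℂ A, f (W.e δ a b) ≠ 0 := by
      by_contra hcon
      push_neg at hcon
      exact h0 ((Module.forall_dual_apply_eq_zero_iff ℂ _).mp hcon)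
    obtain ⟨f, hf⟩ := hf
    set g : A →ₗ[ℂ] ℂ :=
      f ∘ₗ LinearMap.mulLeft ℂ (W.e δ a b) ∘ₗ LinearMap.mulRight ℂ (W.e δ a b) with hg
    set φ : A ⊗[ℂ] A →ₗ[ℂ] A :=
      (TensorProduct.rid ℂ A).toLinearMap ∘ₗ
        TensorProduct.map (LinearMap.id : A →ₗ[ℂ] A) g with hφ
    have hφt : ∀ x y : A, φ (x ⊗ₜ[ℂ] y) = f (W.e δ a b * (y * W.e δ a b)) • x := by
      intro x y
      simp [hφ, hg, TensorProduct.rid_tmul]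
    have hsum : ∀ u : (γ : Γ) → Fin (n γ) → Fin (n γ) → A,
        φ (∑ γ : Γ, ∑ i : Fin (n γ), ∑ j : Fin (n γ),
            (n γ : ℂ)⁻¹ • (u γ i j ⊗ₜ[ℂ] W.e γ j i)) =
          ((n δ : ℂ)⁻¹ * f (W.e δ a b)) • u δ a b := by
      intro u
      rw [map_sum]
      rw [Fintype.sum_eq_single δ (fun γ hγ => ?_)]
      · rw [map_sum, Fintype.sum_eq_single a (fun i hi => ?_)]
        · rw [map_sum, Fintype.sum_eq_single b (fun j hj => ?_)]
          · rw [map_smul, hφt, W.e_mul_same, if_pos rfl, W.e_mul_same, if_pos rfl,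
              smul_smul]
          · rw [map_smul, hφt, W.e_mul_same, if_pos rfl, W.e_mul_same,
              if_neg (fun h => hj h.symm), map_zero, zero_smul, smul_zero]
        · rw [map_sum]
          apply Finset.sum_eq_zero; intro j _
          rw [map_smul, hφt, W.e_mul_same, if_neg (fun h => hi h), mul_zero,
            map_zero, zero_smul, smul_zero]
      · rw [map_sum]
        apply Finset.sum_eq_zero; intro i _
        rw [map_sum]
        apply Finset.sum_eq_zero; intro j _
        rw [map_smul, hφt, W.e_mul_ne γ δ hγ, mul_zero, map_zero, zero_smul,
          smul_zero]
    have h7 := congrArg φ h6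
    rw [hsum (fun γ i j => q * W.e γ i j),
      hsum (fun γ i j => W.κinv (W.κinv (W.e γ i j * q)))] at h7
    have hc : ((n δ : ℂ)⁻¹ * f (W.e δ a b)) ≠ 0 := by
      have hnn := W.n_pos δ
      have hn : (n δ : ℂ) ≠ 0 := by exact_mod_cast (by omega : (n δ : ℕ) ≠ 0)
      exact mul_ne_zero (inv_ne_zero hn) hf
    exact (smul_right_injective A hc h7).symm

lemma aux_kq_comm (q k : A) (hqt : q ∈ W.tgt) (hqf : W.qFormula q)
    (hkt : k ∈ W.tgt) (hk2 : W.κ (W.κ k) = k) : k * q = q * k := by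
  have hQ : ∀ t, t ∈ Submodule.span ℂ
      (Set.range fun p : Σ γ : Γ, Fin (n γ) × Fin (n γ) => W.e p.1 p.2.1 p.2.2) →
      W.κinv (W.κinv (t * q)) = q * t := by
    intro t ht
    induction ht using Submodule.span_induction with
    | mem x hx =>
        obtain ⟨⟨δ, c, d⟩, rfl⟩ := hx
        exact W.aux_key_q q hqt hqf δ c d
    | zero => simp [W.aux_κinv_zero]
    | add x y hx hy ihx ihy =>
        rw [add_mul, W.aux_κinv_add, W.aux_κinv_add, ihx, ihy, mul_add]
    | smul c x hx ih =>
        rw [smul_mul_assoc, W.aux_κinv_smul, W.aux_κinv_smul, ih, mul_smul_comm]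
  have h1 : W.κinv (W.κinv q) = q := by
    have := hQ 1 W.aux_one_mem_span
    rwa [one_mul, mul_one] at this
  have hk' : W.κinv (W.κinv k) = k := by
    calc W.κinv (W.κinv k) = W.κinv (W.κinv (W.κ (W.κ k))) := by rw [hk2]
      _ = W.κinv (W.κ k) := by rw [W.aux_κinv_κ]
      _ = k := W.aux_κinv_κ k
  calc k * q = W.κinv (W.κinv k) * W.κinv (W.κinv q) := by rw [hk', h1]
    _ = W.κinv (W.κinv q * W.κinv k) := (W.aux_κinv_antimul _ _).symm
    _ = W.κinv (W.κinv (k * q)) := by rw [← W.aux_κinv_antimul]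
    _ = q * k := hQ k (W.e_span k hkt)

end WeakHopfCStar
/-- The Cartan subalgebras of the deformed structure coincide with the original ones,
and `k⁻¹q` is an invertible element of `A_t` which is the canonical element of the
deformed structure: `Δ_k(1) = Σ (1/n_γ) κ_k⁻¹(e^γ_{i,j} (k⁻¹q)) ⊗ e^γ_{j,i}`, where
`κ_k⁻¹ : a ↦ κ⁻¹(k⁻¹ a k)` is the inverse of the bijection `κ_k`. -/
theorem WeakHopfCStar.deformed_Cartan_and_q {A Γ : Type*} [Fintype Γ] [DecidableEq Γ]
    [NormedRing A] [StarRing A] [CStarRing A] [NormedAlgebra ℂ A] [StarModule ℂ A]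
    [FiniteDimensional ℂ A] {n : Γ → ℕ} (W : WeakHopfCStar A Γ n)
    (q : A) (hqt : q ∈ W.tgt) (hqu : IsUnit q) (hqf : W.qFormula q)
    (k : A) (hkt : k ∈ W.tgt) (hku : IsUnit k) (hkpos : ∃ b : A, k = star b * b)
    (hk2 : W.κ (W.κ k) = k) (hkE : W.EZt (Ring.inverse k * q) = 1) :
    {x : A | W.Δk k x = W.Δk k 1 * (x ⊗ₜ[ℂ] (1 : A)) ∧
        W.Δk k x = (x ⊗ₜ[ℂ] (1 : A)) * W.Δk k 1} = W.tgt ∧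
    {x : A | W.Δk k x = W.Δk k 1 * ((1 : A) ⊗ₜ[ℂ] x) ∧
        W.Δk k x = ((1 : A) ⊗ₜ[ℂ] x) * W.Δk k 1} = W.src ∧
    IsUnit (Ring.inverse k * q) ∧ Ring.inverse k * q ∈ W.tgt ∧
    (∀ a : A, W.κinv (Ring.inverse k * W.κk k a * k) = a) ∧
    (∀ a : A, W.κk k (W.κinv (Ring.inverse k * a * k)) = a) ∧
    W.Δk k 1 = ∑ γ : Γ, ∑ i : Fin (n γ), ∑ j : Fin (n γ),
      (n γ : ℂ)⁻¹ •
        (W.κinv (Ring.inverse k * (W.e γ i j * (Ring.inverse k * q)) * k)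
          ⊗ₜ[ℂ] W.e γ j i) := by
  classical
  set K := Ring.inverse k with hKdef
  have hkK : k * K = 1 := Ring.mul_inverse_cancel k hku
  have hKk : K * k = 1 := Ring.inverse_mul_cancel k hku
  have humul1 : ((1 : A) ⊗ₜ[ℂ] K) * ((1 : A) ⊗ₜ[ℂ] k) = 1 := by
    rw [Algebra.TensorProduct.tmul_mul_tmul, one_mul, hKk, Algebra.TensorProduct.one_def]
  have hcancel : ∀ x y : A ⊗[ℂ] A,
      x * ((1 : A) ⊗ₜ[ℂ] K) = y * ((1 : A) ⊗ₜ[ℂ] K) → x = y := by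
    intro x y h
    have h' := congrArg (· * ((1 : A) ⊗ₜ[ℂ] k)) h
    simpa only [mul_assoc, humul1, mul_one] using h'
  have hΔk_apply : ∀ x : A, W.Δk k x = W.Δ x * ((1 : A) ⊗ₜ[ℂ] K) := by
    intro x
    simp only [Δk, LinearMap.comp_apply, LinearMap.mulRight_apply, hKdef]
  have hκk_apply : ∀ a : A, W.κk k a = k * (W.κ a * K) := by
    intro a
    simp only [κk, LinearMap.comp_apply, LinearMap.mulLeft_apply,
      LinearMap.mulRight_apply, hKdef]
  have hxK_of : ∀ x : A, x * k = k * x → x * K = K * x := by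
    intro x h
    symm
    calc K * x = K * x * (k * K) := by rw [hkK, mul_one]
      _ = K * (x * k) * K := by rw [← mul_assoc, mul_assoc K x k]
      _ = K * (k * x) * K := by rw [h]
      _ = x * K := by rw [← mul_assoc, hKk, one_mul]
  refine ⟨?_, ?_, ?_, ?_, ?_, ?_, ?_⟩
  · -- deformed target = target
    ext x
    have hu_comm : ((1 : A) ⊗ₜ[ℂ] K) * (x ⊗ₜ[ℂ] (1 : A)) =
        (x ⊗ₜ[ℂ] (1 : A)) * ((1 : A) ⊗ₜ[ℂ] K) := by
      rw [Algebra.TensorProduct.tmul_mul_tmul, Algebra.TensorProduct.tmul_mul_tmul,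
        one_mul, mul_one, one_mul, mul_one]
    simp only [Set.mem_setOf_eq, hΔk_apply]
    constructor
    · rintro ⟨h1, h2⟩
      constructor
      · exact hcancel _ _ (by rw [h1, mul_assoc, hu_comm, ← mul_assoc])
      · exact hcancel _ _ (by rw [h2, ← mul_assoc])
    · rintro ⟨g1, g2⟩
      constructor
      · rw [g1, mul_assoc, mul_assoc, ← hu_comm]
      · rw [g2, mul_assoc]
  · -- deformed source = source
    ext x
    simp only [Set.mem_setOf_eq, hΔk_apply]
    constructor
    · rintro ⟨h1, h2⟩
      have hhalf : W.Δ x = ((1 : A) ⊗ₜ[ℂ] x) * W.Δ 1 :=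
        hcancel _ _ (by rw [h2, mul_assoc])
      have hcm : x * k = k * x := W.aux_src_half_comm hhalf hkt
      have hxK : x * K = K * x := hxK_of x hcm
      have htens : ((1 : A) ⊗ₜ[ℂ] x) * ((1 : A) ⊗ₜ[ℂ] K) =
          ((1 : A) ⊗ₜ[ℂ] K) * ((1 : A) ⊗ₜ[ℂ] x) := by
        rw [Algebra.TensorProduct.tmul_mul_tmul, Algebra.TensorProduct.tmul_mul_tmul,
          one_mul, hxK]
      have cond1 : W.Δ x = W.Δ 1 * ((1 : A) ⊗ₜ[ℂ] x) :=
        hcancel _ _ (by rw [h1, mul_assoc, mul_assoc, htens])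
      exact ⟨cond1, hhalf⟩
    · rintro ⟨g1, g2⟩
      have hcm : x * k = k * x := W.aux_src_half_comm g2 hkt
      have hxK : x * K = K * x := hxK_of x hcm
      have htens : ((1 : A) ⊗ₜ[ℂ] x) * ((1 : A) ⊗ₜ[ℂ] K) =
          ((1 : A) ⊗ₜ[ℂ] K) * ((1 : A) ⊗ₜ[ℂ] x) := by
        rw [Algebra.TensorProduct.tmul_mul_tmul, Algebra.TensorProduct.tmul_mul_tmul,
          one_mul, hxK]
      constructor
      · rw [g1, mul_assoc, mul_assoc, htens]
      · rw [g2, mul_assoc]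
  · exact (isUnit_ringInverse.mpr hku).mul hqu
  · exact W.aux_tgt_mul (W.aux_tgt_inverse hkt hku) hqt
  · intro a
    rw [hκk_apply]
    have harg : K * (k * (W.κ a * K)) * k = W.κ a := by
      simp only [mul_assoc]
      rw [hKk, mul_one, ← mul_assoc, hKk, one_mul]
    rw [harg]
    exact W.aux_κinv_κ a
  · intro a
    rw [hκk_apply, W.aux_κ_κinv]
    simp only [mul_assoc]
    rw [hkK, mul_one, ← mul_assoc, hkK, one_mul]
  · -- the canonical element of the deformed structure
    have hqk : q * k = k * q := (W.aux_kq_comm q k hqt hqf hkt hk2).symm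
    have hKqk : K * q * k = q := by
      rw [mul_assoc, hqk, ← mul_assoc, hKk, one_mul]
    have harg : ∀ (γ : Γ) (i j : Fin (n γ)),
        K * (W.e γ i j * (K * q)) * k = K * W.e γ i j * q := by
      intro γ i j
      calc K * (W.e γ i j * (K * q)) * k = K * W.e γ i j * (K * q * k) := by
            simp only [mul_assoc]
        _ = K * W.e γ i j * q := by rw [hKqk]
    have hshift := W.aux_sum_shift (W.κinvL ∘ₗ LinearMap.mulRight ℂ q)
      (W.e_span K (W.aux_tgt_inverse hkt hku))
    simp only [LinearMap.comp_apply, LinearMap.mulRight_apply, κinvL_apply] at hshift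
    have hL : W.Δk k 1 = ∑ γ : Γ, ∑ i : Fin (n γ), ∑ j : Fin (n γ),
        (n γ : ℂ)⁻¹ • (W.κinv (W.e γ i j * q) ⊗ₜ[ℂ] (W.e γ j i * K)) := by
      rw [hΔk_apply 1, hqf, Finset.sum_mul]
      apply Finset.sum_congr rfl; intro γ _
      rw [Finset.sum_mul]; apply Finset.sum_congr rfl; intro i _
      rw [Finset.sum_mul]; apply Finset.sum_congr rfl; intro j _
      rw [smul_mul_assoc, Algebra.TensorProduct.tmul_mul_tmul, mul_one]
    rw [hL, ← hshift]
    apply Finset.sum_congr rfl; intro γ _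
    apply Finset.sum_congr rfl; intro i _
    apply Finset.sum_congr rfl; intro j _
    rw [harg γ i j]
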